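/- In the hypercube {0,1}^m with Hamming distance, any set of pairwise equidistant points (all pairwise distances equal to some fixed d > 0) has at most m+1 elements. -/

import Mathlib

open Finset

noncomputable def embPM {m : ℕ} (x : Fin m → Bool) : EuclideanSpace ℝ (Fin m) :=
  WithLp.toLp 2 (fun i => if x i then (1 : ℝ) else -1)

lemma inner_embPM {m : ℕ} (x y : Fin m → Bool) :
    (inner ℝ (embPM x) (embPM y) : ℝ) = (m : ℝ) - 2 * hammingDist x y := by
  have h1 : (inner ℝ (embPM x) (embPM y) : ℝ)
      = ∑ i, ((1 : ℝ) - 2 * (if x i ≠ y i then 1 else 0)) := by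
    rw [PiLp.inner_apply]
    apply Finset.sum_congr rfl
    intro i _
    simp only [RCLike.inner_apply, conj_trivial, embPM, PiLp.toLp_apply]
    rcases hx : x i <;> rcases hy : y i <;> simp [hx, hy] <;> norm_num
  rw [h1, Finset.sum_sub_distrib]
  simp only [Finset.sum_const, Finset.card_univ, Fintype.card_fin, nsmul_eq_mul, mul_one]
  rw [← Finset.mul_sum, Finset.sum_boole]
  rw [hammingDist]

theorem hypercube_equidistant_card_le (m d : ℕ) (hd : 0 < d)
    (S : Finset (Fin m → Bool))
    (h : ∀ x ∈ S, ∀ y ∈ S, x ≠ y → hammingDist x y = d) :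
    S.card ≤ m + 1 := by
  by_cases hS : S.card ≤ 1
  · omega
  push_neg at hS
  obtain ⟨x0, hx0⟩ := Finset.card_pos.mp (show 0 < S.card by omega)
  set T : Finset (Fin m → Bool) := S.erase x0 with hT
  set v : T → EuclideanSpace ℝ (Fin m) :=
    fun y => embPM (y : Fin m → Bool) - embPM x0 with hv
  have hinner : ∀ y z : T, (inner ℝ (v y) (v z) : ℝ)
      = if y = z then 4 * d else 2 * d := by
    intro y z
    have hyS : (y : Fin m → Bool) ∈ S := Finset.mem_of_mem_erase y.2
    have hzS : (z : Fin m → Bool) ∈ S := Finset.mem_of_mem_erase z.2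
    have hyne : (y : Fin m → Bool) ≠ x0 := Finset.ne_of_mem_erase y.2
    have hzne : (z : Fin m → Bool) ≠ x0 := Finset.ne_of_mem_erase z.2
    have hx0S : x0 ∈ S := hx0
    simp only [hv, inner_sub_left, inner_sub_right]
    rw [inner_embPM, inner_embPM, inner_embPM, inner_embPM]
    rw [h _ hyS _ hx0S hyne, h _ hx0S _ hzS (Ne.symm hzne), hammingDist_self]
    by_cases hyz : y = z
    · subst hyz
      rw [hammingDist_self]
      push_cast
      simp
      ring
    · have : (y : Fin m → Bool) ≠ z := fun e => hyz (Subtype.ext e)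
      rw [h _ hyS _ hzS this]
      simp [hyz]
  have hli : LinearIndependent ℝ v := by
    rw [Fintype.linearIndependent_iff]
    intro g hg
    set Sg : ℝ := ∑ y, g y with hSg
    have key : ∀ z : T, 2 * (d : ℝ) * (g z + Sg) = 0 := by
      intro z
      have h0 : (inner ℝ (∑ y, g y • v y) (v z) : ℝ) = 0 := by rw [hg]; simp
      rw [sum_inner] at h0
      simp only [real_inner_smul_left] at h0
      have h1 : ∑ y, g y * (inner ℝ (v y) (v z) : ℝ)
          = ∑ y, (g y * (2 * d) + (if y = z then g y * (2 * d) else 0)) := by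
        apply Finset.sum_congr rfl
        intro y _
        rw [hinner]
        by_cases hyz : y = z <;> simp [hyz] <;> ring
      rw [h1, Finset.sum_add_distrib, Finset.sum_ite_eq' Finset.univ z] at h0
      simp only [Finset.mem_univ, if_true, ← Finset.sum_mul] at h0
      rw [← hSg] at h0
      linarith
    have hdpos : (0 : ℝ) < 2 * d := by positivity
    have key2 : ∀ z : T, g z = -Sg := by
      intro z
      have := key z
      have h2 : g z + Sg = 0 := by
        rcases mul_eq_zero.mp this with h' | h'
        · exact absurd h' (ne_of_gt hdpos)
        · exact h'
      linarith
    have hsum : Sg = -(Fintype.card T : ℝ) * Sg := by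
      calc Sg = ∑ z : T, g z := hSg
        _ = ∑ _z : T, -Sg := by exact Finset.sum_congr rfl fun z _ => key2 z
        _ = -(Fintype.card T : ℝ) * Sg := by simp [Finset.sum_const, Fintype.card]
    have hSg0 : Sg = 0 := by
      have : (1 + (Fintype.card T : ℝ)) * Sg = 0 := by linarith
      rcases mul_eq_zero.mp this with h' | h'
      · exfalso; have : (0:ℝ) ≤ (Fintype.card T : ℝ) := Nat.cast_nonneg _; linarith
      · exact h'
    intro z
    rw [key2 z, hSg0, neg_zero]
  have hcard := hli.fintype_card_le_finrank
  rw [finrank_euclideanSpace_fin] at hcard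
  have : Fintype.card T = T.card := Fintype.card_coe T
  have hTcard : T.card = S.card - 1 := Finset.card_erase_of_mem hx0
  omega
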